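/- For |q| < 1 and |z| < 1, we have 1/(z;q)_∞ = Σ_{j≥0} z^j/(q;q)_j, where (z;q)_∞ = Π_{l≥0}(1 - z q^l). -/

import Mathlib

noncomputable def qPoch (z q : ℂ) (n : ℕ) : ℂ := ∏ i ∈ Finset.range n, (1 - z * q ^ i)

open Filter Topology

namespace QPochAux

lemma factor_ne {q : ℂ} (hq : ‖q‖ < 1) (i : ℕ) : (1 : ℂ) - q * q ^ i ≠ 0 := by
  intro h
  have h1 : q * q ^ i = 1 := by linear_combination -h
  have : ‖q * q ^ i‖ < 1 := by
    rw [norm_mul, norm_pow]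
    calc ‖q‖ * ‖q‖ ^ i ≤ ‖q‖ * 1 := by
          gcongr
          exact pow_le_one₀ (norm_nonneg _) hq.le
      _ < 1 := by simpa using hq
  rw [h1] at this; simp at this

lemma qPoch_ne {q : ℂ} (hq : ‖q‖ < 1) (j : ℕ) : qPoch q q j ≠ 0 :=
  Finset.prod_ne_zero_iff.mpr fun i _ => factor_ne hq i

lemma qPoch_succ (q : ℂ) (j : ℕ) : qPoch q q (j + 1) = qPoch q q j * (1 - q * q ^ j) := by
  simp [qPoch, Finset.prod_range_succ]

/-- Summability of the series for `‖w‖ < 1`. -/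
lemma summable_aux {q : ℂ} (hq : ‖q‖ < 1) {w : ℂ} (hw : ‖w‖ < 1) :
    Summable (fun j : ℕ => w ^ j / qPoch q q j) := by
  rcases eq_or_ne w 0 with rfl | hw0
  · apply summable_of_ne_finset_zero (s := {0})
    intro j hj
    simp only [Finset.mem_singleton] at hj
    simp [zero_pow hj]
  · apply summable_of_ratio_test_tendsto_lt_one (l := ‖w‖) hw
    · exact Eventually.of_forall fun n =>
        div_ne_zero (pow_ne_zero _ hw0) (qPoch_ne hq n)
    · have h1 : Tendsto (fun n : ℕ => (1 : ℂ) - q * q ^ n) atTop (𝓝 1) := by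
        have := (tendsto_pow_atTop_nhds_zero_of_norm_lt_one hq).const_mul q
        simpa using (tendsto_const_nhds (x := (1:ℂ))).sub this
      have h2 : Tendsto (fun n : ℕ => ‖w / (1 - q * q ^ n)‖) atTop (𝓝 ‖w‖) := by
        have := ((tendsto_const_nhds (x := w)).div h1 one_ne_zero).norm
        simpa using this
      apply h2.congr
      intro n
      have hDn := qPoch_ne hq n
      have hfn := factor_ne hq n
      rw [← norm_div]
      congr 1
      rw [qPoch_succ]
      field_simp
      ring

/-- The functional equation `(1 - w) * S w = S (q * w)`. -/
lemma funEq {q : ℂ} (hq : ‖q‖ < 1) {w : ℂ} (hw : ‖w‖ < 1) :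
    (1 - w) * ∑' j : ℕ, w ^ j / qPoch q q j
      = ∑' j : ℕ, (q * w) ^ j / qPoch q q j := by
  have hqw : ‖q * w‖ < 1 := by
    rw [norm_mul]
    calc ‖q‖ * ‖w‖ ≤ 1 * ‖w‖ := by gcongr
      _ < 1 := by simpa using hw
  have hs := summable_aux hq hw
  have hs' := summable_aux hq hqw
  -- the difference series
  have hsub : Summable (fun j : ℕ => w ^ j / qPoch q q j - (q * w) ^ j / qPoch q q j) :=
    hs.sub hs'
  have key : ∑' j : ℕ, (w ^ j / qPoch q q j - (q * w) ^ j / qPoch q q j)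
      = w * ∑' j : ℕ, w ^ j / qPoch q q j := by
    rw [Summable.tsum_eq_zero_add hsub]
    have h0 : w ^ 0 / qPoch q q 0 - (q * w) ^ 0 / qPoch q q 0 = 0 := by simp [qPoch]
    rw [h0, zero_add, ← tsum_mul_left]
    congr 1
    funext j
    have hDj := qPoch_ne hq j
    have hfj := factor_ne hq j
    rw [qPoch_succ]
    field_simp
    ring
  have := Summable.tsum_sub hs hs'
  rw [this] at key
  linear_combination key

/-- Iterated functional equation. -/
lemma iter {q z : ℂ} (hq : ‖q‖ < 1) (hz : ‖z‖ < 1) (n : ℕ) :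
    (∏ i ∈ Finset.range n, (1 - z * q ^ i)) * ∑' j : ℕ, z ^ j / qPoch q q j
      = ∑' j : ℕ, (q ^ n * z) ^ j / qPoch q q j := by
  induction n with
  | zero => simp
  | succ n ih =>
    have hqnz : ‖q ^ n * z‖ < 1 := by
      rw [norm_mul, norm_pow]
      calc ‖q‖ ^ n * ‖z‖ ≤ 1 * ‖z‖ := by
            gcongr
            exact pow_le_one₀ (norm_nonneg _) hq.le
        _ < 1 := by simpa using hz
    rw [Finset.prod_range_succ, mul_comm (∏ i ∈ Finset.range n, (1 - z * q ^ i)) _,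
      mul_assoc, ih]
    have := funEq hq hqnz
    have harg : q * (q ^ n * z) = q ^ (n + 1) * z := by ring
    have harg2 : (1 : ℂ) - z * q ^ n = 1 - q ^ n * z := by ring
    rw [harg2, this, harg]

set_option maxHeartbeats 1000000 in
/-- The shifted series tends to 1. -/
lemma tendsto_one {q z : ℂ} (hq : ‖q‖ < 1) (hz : ‖z‖ < 1) :
    Tendsto (fun n : ℕ => ∑' j : ℕ, (q ^ n * z) ^ j / qPoch q q j) atTop (𝓝 1) := by
  have hnorm : Summable (fun j : ℕ => ‖z ^ j / qPoch q q j‖) :=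
    (summable_norm_iff).mpr (summable_aux hq hz)
  have htail : Summable (fun j : ℕ => ‖z ^ (j + 1) / qPoch q q (j + 1)‖) :=
    (summable_nat_add_iff 1).mpr hnorm
  set M : ℝ := ∑' j : ℕ, ‖z ^ (j + 1) / qPoch q q (j + 1)‖ with hM
  have hqnz : ∀ n : ℕ, ‖q ^ n * z‖ < 1 := by
    intro n
    rw [norm_mul, norm_pow]
    calc ‖q‖ ^ n * ‖z‖ ≤ 1 * ‖z‖ := by
          gcongr
          exact pow_le_one₀ (norm_nonneg _) hq.le
      _ < 1 := by simpa using hz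
  have hbound : ∀ n : ℕ,
      ‖(∑' j : ℕ, (q ^ n * z) ^ j / qPoch q q j) - 1‖ ≤ ‖q‖ ^ n * M := by
    intro n
    have hs := summable_aux hq (hqnz n)
    have hsn : Summable (fun j : ℕ => ‖(q ^ n * z) ^ j / qPoch q q j‖) :=
      (summable_norm_iff).mpr hs
    have hsn' : Summable (fun j : ℕ => ‖(q ^ n * z) ^ (j + 1) / qPoch q q (j + 1)‖) :=
      (summable_nat_add_iff 1).mpr hsn
    have heq : (∑' j : ℕ, (q ^ n * z) ^ j / qPoch q q j) - 1
        = ∑' j : ℕ, (q ^ n * z) ^ (j + 1) / qPoch q q (j + 1) := by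
      rw [Summable.tsum_eq_zero_add hs]
      simp [qPoch]
    rw [heq]
    calc ‖∑' j : ℕ, (q ^ n * z) ^ (j + 1) / qPoch q q (j + 1)‖
        ≤ ∑' j : ℕ, ‖(q ^ n * z) ^ (j + 1) / qPoch q q (j + 1)‖ :=
          norm_tsum_le_tsum_norm hsn'
      _ ≤ ∑' j : ℕ, ‖q‖ ^ n * ‖z ^ (j + 1) / qPoch q q (j + 1)‖ := by
          apply Summable.tsum_le_tsum _ hsn' (htail.mul_left _)
          intro j
          have hD : (0:ℝ) < ‖qPoch q q (j + 1)‖ :=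
            norm_pos_iff.mpr (qPoch_ne hq (j + 1))
          rw [norm_div, norm_div, norm_pow, norm_pow, ← mul_div_assoc]
          gcongr
          rw [norm_mul, norm_pow, mul_pow, ← pow_mul]
          have h1 : ‖q‖ ^ (n * (j + 1)) ≤ ‖q‖ ^ n :=
            pow_le_pow_of_le_one (norm_nonneg _) hq.le
              (Nat.le_mul_of_pos_right n (Nat.succ_pos j))
          gcongr
      _ = ‖q‖ ^ n * M := by rw [hM, tsum_mul_left]
  have hlim : Tendsto (fun n : ℕ => ‖q‖ ^ n * M) atTop (𝓝 0) := by
    simpa using (tendsto_pow_atTop_nhds_zero_of_lt_one (norm_nonneg q) hq).mul_const M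
  have h0 : Tendsto (fun n : ℕ =>
      (∑' j : ℕ, (q ^ n * z) ^ j / qPoch q q j) - 1) atTop (𝓝 0) := by
    rw [tendsto_zero_iff_norm_tendsto_zero]
    exact squeeze_zero (fun n => norm_nonneg _) hbound hlim
  have := h0.add (tendsto_const_nhds (x := (1 : ℂ)))
  simpa using this

/-- Multipliability of the infinite product. -/
lemma hasProd_aux {q z : ℂ} (hq : ‖q‖ < 1) (hz : ‖z‖ < 1) :
    HasProd (fun l : ℕ => 1 - z * q ^ l) (∏' l : ℕ, (1 - z * q ^ l)) := by
  have hne : ∀ l : ℕ, (1 : ℂ) - z * q ^ l ≠ 0 := by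
    intro l h
    have h1 : z * q ^ l = 1 := by linear_combination -h
    have : ‖z * q ^ l‖ < 1 := by
      rw [norm_mul, norm_pow]
      calc ‖z‖ * ‖q‖ ^ l ≤ ‖z‖ * 1 := by
            gcongr
            exact pow_le_one₀ (norm_nonneg _) hq.le
        _ < 1 := by simpa using hz
    rw [h1] at this; simp at this
  have hlog : Summable (fun l : ℕ => Complex.log (1 - z * q ^ l)) := by
    apply Summable.of_norm_bounded_eventually
      (g := fun l : ℕ => 3 / 2 * (‖z‖ * ‖q‖ ^ l))
    · exact ((summable_geometric_of_lt_one (norm_nonneg q) hq).mul_left ‖z‖).mul_left _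
    · rw [Nat.cofinite_eq_atTop]
      have hto : Tendsto (fun l : ℕ => ‖z‖ * ‖q‖ ^ l) atTop (𝓝 0) := by
        simpa using (tendsto_pow_atTop_nhds_zero_of_lt_one (norm_nonneg q) hq).const_mul ‖z‖
      have hev : ∀ᶠ l : ℕ in atTop, ‖z‖ * ‖q‖ ^ l ≤ 1 / 2 := by
        have := hto.eventually_le_const (by norm_num : (0:ℝ) < 1/2)
        simpa using this
      filter_upwards [hev] with l hl
      have h1 : ‖-(z * q ^ l)‖ ≤ 1 / 2 := by
        rw [norm_neg, norm_mul, norm_pow]; exact hl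
      have := Complex.norm_log_one_add_half_le_self h1
      have heq : (1 : ℂ) + -(z * q ^ l) = 1 - z * q ^ l := by ring
      rw [heq, norm_neg, norm_mul, norm_pow] at this
      exact this
  have := (Complex.multipliable_of_summable_log hlog).hasProd
  exact this

end QPochAux

theorem stmt2 (q z : ℂ) (hq : ‖q‖ < 1) (hz : ‖z‖ < 1) :
    (∏' l : ℕ, (1 - z * q ^ l))⁻¹ = ∑' j : ℕ, z ^ j / qPoch q q j := by
  have hP := (QPochAux.hasProd_aux hq hz).tendsto_prod_nat
  have h1 : Tendsto (fun n : ℕ =>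
      (∏ i ∈ Finset.range n, (1 - z * q ^ i)) * ∑' j : ℕ, z ^ j / qPoch q q j)
      atTop (𝓝 ((∏' l : ℕ, (1 - z * q ^ l)) * ∑' j : ℕ, z ^ j / qPoch q q j)) :=
    hP.mul_const _
  have h2 : Tendsto (fun n : ℕ =>
      (∏ i ∈ Finset.range n, (1 - z * q ^ i)) * ∑' j : ℕ, z ^ j / qPoch q q j)
      atTop (𝓝 1) := by
    have := QPochAux.tendsto_one hq hz
    apply this.congr
    intro n
    exact (QPochAux.iter hq hz n).symm
  have hmain : (∏' l : ℕ, (1 - z * q ^ l)) * (∑' j : ℕ, z ^ j / qPoch q q j) = 1 :=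
    tendsto_nhds_unique h1 h2
  exact inv_eq_of_mul_eq_one_right hmain
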